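/- For all x > 0, with A = (x+1)/2, G = √x, H = 2x/(x+1), S = √((x²+1)/2), the following chain holds: (1/6)(3A − (2S+H)) ≤ (1/3)(A − (G+S)/2) ≤ (1/12)(3A + H − (S + 3G)) ≤ (1/3)((A+H)/2 − G) ≤ (1/6)(S + 2H − 3G). -/

import Mathlib

theorem refined_chain (x : ℝ) (hx : 0 < x) :
    (1 / 6) * (3 * ((x + 1) / 2) - (2 * Real.sqrt ((x ^ 2 + 1) / 2) + 2 * x / (x + 1))) ≤
      (1 / 3) * ((x + 1) / 2 - (Real.sqrt x + Real.sqrt ((x ^ 2 + 1) / 2)) / 2) ∧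
    (1 / 3) * ((x + 1) / 2 - (Real.sqrt x + Real.sqrt ((x ^ 2 + 1) / 2)) / 2) ≤
      (1 / 12) * (3 * ((x + 1) / 2) + 2 * x / (x + 1) -
        (Real.sqrt ((x ^ 2 + 1) / 2) + 3 * Real.sqrt x)) ∧
    (1 / 12) * (3 * ((x + 1) / 2) + 2 * x / (x + 1) -
        (Real.sqrt ((x ^ 2 + 1) / 2) + 3 * Real.sqrt x)) ≤
      (1 / 3) * (((x + 1) / 2 + 2 * x / (x + 1)) / 2 - Real.sqrt x) ∧
    (1 / 3) * (((x + 1) / 2 + 2 * x / (x + 1)) / 2 - Real.sqrt x) ≤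
      (1 / 6) * (Real.sqrt ((x ^ 2 + 1) / 2) + 2 * (2 * x / (x + 1)) - 3 * Real.sqrt x) := by
  set s := Real.sqrt x with hsdef
  set S := Real.sqrt ((x ^ 2 + 1) / 2) with hSdef
  have hx1 : (0:ℝ) < x + 1 := by linarith
  have hs0 : 0 ≤ s := Real.sqrt_nonneg _
  have hS0 : 0 ≤ S := Real.sqrt_nonneg _
  have hs : s ^ 2 = x := Real.sq_sqrt hx.le
  have hS : S ^ 2 = (x ^ 2 + 1) / 2 := Real.sq_sqrt (by positivity)
  have h2 : 4 * s * S ≤ (x + 1) ^ 2 := by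
    nlinarith [sq_nonneg ((x+1)^2 - 4*s*S), sq_nonneg ((x-1)^2), mul_pos hx1 hx1,
      mul_nonneg hs0 hS0, sq_nonneg (x-1)]
  have key : (x + 1) / 2 + s ≤ S + 2 * x / (x + 1) := by
    rw [← sub_nonneg]
    have h1 : S + 2 * x / (x + 1) - ((x + 1) / 2 + s) =
        (S * (x + 1) + 2 * x - ((x + 1) / 2 + s) * (x + 1)) / (x + 1) := by
      field_simp
    rw [h1]
    apply div_nonneg _ hx1.le
    nlinarith [mul_nonneg (sq_nonneg (s - 1)) (by linarith : (0:ℝ) ≤ (x+1)^2 - 4*s*S)]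
  refine ⟨by linarith, by linarith, by linarith, by linarith⟩
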